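/- Let W be a BMS channel with Z(W) > 0 and let λ ≥ 0 be an integer. Then the function R ↦ E_λ(W,R) is convex on (0,∞). -/

import Mathlib

open scoped BigOperators

/-- A binary-input discrete channel: a finite output alphabet `Y` and a kernel
`W x y` = probability of output `y` given input `x`. -/
structure PreChannel where
  Y : Type
  [fin : Fintype Y]
  W : Bool → Y → ℝ

attribute [instance] PreChannel.fin

namespace PreChannel

/-- `W` is a valid binary memoryless symmetric (BMS) channel. -/
def IsBMS (W : PreChannel) : Prop :=
  (∀ x y, 0 ≤ W.W x y) ∧ (∀ x, ∑ y, W.W x y = 1) ∧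
    ∃ π : W.Y → W.Y, Function.Involutive π ∧ ∀ y, W.W false (π y) = W.W true y

/-- The polar "minus" transform `W⁻`. -/
noncomputable def minus (W : PreChannel) : PreChannel where
  Y := W.Y × W.Y
  fin := inferInstance
  W := fun u₁ p => ∑ u₂ : Bool, (1 / 2) * W.W (Bool.xor u₁ u₂) p.1 * W.W u₂ p.2

/-- The polar "plus" transform `W⁺`; output is `(y₁, y₂, u₁)`. -/
noncomputable def plus (W : PreChannel) : PreChannel where
  Y := W.Y × W.Y × Bool
  fin := inferInstance
  W := fun u₂ p => (1 / 2) * W.W (Bool.xor p.2.2 u₂) p.1 * W.W u₂ p.2.1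

/-- Capacity `I(W)` (in bits). -/
noncomputable def cap (W : PreChannel) : ℝ :=
  ∑ x : Bool, ∑ y, (1 / 2) * W.W x y *
    Real.logb 2 (W.W x y / ((1 / 2) * W.W false y + (1 / 2) * W.W true y))

/-- Dispersion `V(W)`. -/
noncomputable def disp (W : PreChannel) : ℝ :=
  (∑ x : Bool, ∑ y, (1 / 2) * W.W x y *
      (Real.logb 2 (W.W x y / ((1 / 2) * W.W false y + (1 / 2) * W.W true y))) ^ 2)
    - cap W ^ 2

/-- Gallager's function `E₀(W, ρ)` (natural logarithm). -/
noncomputable def E0 (W : PreChannel) (ρ : ℝ) : ℝ :=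
  - Real.log
      (∑ y, ((1 / 2) * (W.W false y ^ (1 / (1 + ρ)) + W.W true y ^ (1 / (1 + ρ)))) ^ (1 + ρ))

/-- Bhattacharyya parameter `Z(W)`. -/
noncomputable def Zb (W : PreChannel) : ℝ := ∑ y, Real.sqrt (W.W false y * W.W true y)

/-- `E_x(W, ρ) = −ρ ln[(1 + Z(W)^{1/ρ})/2]`. -/
noncomputable def Ex (W : PreChannel) (ρ : ℝ) : ℝ :=
  - ρ * Real.log ((1 + Zb W ^ (1 / ρ)) / 2)

/-- Random-coding exponent `E_r(W, R)` as an extended real: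
`max_{0 ≤ ρ ≤ 1} [E₀(W,ρ) − ρ R ln 2]` for `0 < R ≤ 1`, `+∞` at `R = 0`, `0` for `R > 1`. -/
noncomputable def Er (W : PreChannel) (R : ℝ) : EReal :=
  if R = 0 then ⊤
  else if 1 < R then 0
  else ((sSup {x : ℝ | ∃ ρ ∈ Set.Icc (0 : ℝ) 1, x = E0 W ρ - ρ * R * Real.log 2} : ℝ) : EReal)

/-- Expurgated exponent `E_ex(W, R) = sup_{ρ ≥ 1} [E_x(W,ρ) − ρ R ln 2]`. -/
noncomputable def Eex (W : PreChannel) (R : ℝ) : EReal :=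
  ⨆ ρ : {ρ : ℝ // 1 ≤ ρ}, ((Ex W ρ.1 - ρ.1 * R * Real.log 2 : ℝ) : EReal)

/-- `E(W, R) = max [E_r(W,R), E_ex(W,R)]` for `R ≤ 1`, and `0` for `R > 1`. -/
noncomputable def Echan (W : PreChannel) (R : ℝ) : EReal :=
  if 1 < R then 0 else max (Er W R) (Eex W R)

/-- `E(W, R, N₁) = max [E_r(W,R), E_ex(W, R + 2/N₁)]`. -/
noncomputable def EchanN (W : PreChannel) (R : ℝ) (N₁ : ℕ) : EReal :=
  max (Er W R) (Eex W (R + 2 / (N₁ : ℝ)))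

/-- Sub-channel `Wᵢ` after `lam` polarization steps: the most significant bit of `i`
is applied first, bit `1` = plus, bit `0` = minus. -/
noncomputable def subch : PreChannel → (lam : ℕ) → ℕ → PreChannel
  | W, 0, _ => W
  | W, l + 1, i => subch (if i / 2 ^ l % 2 = 1 then W.plus else W.minus) l (i % 2 ^ l)

/-- `W^s` for a sign sequence `s` (`true` = plus, `false` = minus), applied in order. -/
noncomputable def polarSeq : PreChannel → List Bool → PreChannel
  | W, [] => W
  | W, b :: rest => polarSeq (if b then W.plus else W.minus) rest

/-- `exp(−t·E)` for `E ∈ [0, +∞]`, with the convention `exp(−∞) = 0`. -/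
noncomputable def dexp (t : ℝ) (E : EReal) : ℝ :=
  if E = ⊤ then 0 else Real.exp (-t * E.toReal)

/-- `−ln s` with the convention `−ln 0 = +∞`. -/
noncomputable def nlog (s : ℝ) : EReal :=
  if s ≤ 0 then ⊤ else ((-Real.log s : ℝ) : EReal)

/-- The finite-blocklength exponent `E_λ(W, R, N₁)`:
`(1/(N₁ 2^λ)) · max over admissible rate tuples of −ln Σᵢ exp(−N₁ E(Wᵢ, Rᵢ, N₁))`. -/
noncomputable def ElamN (W : PreChannel) (lam N₁ : ℕ) (R : ℝ) : EReal :=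
  ((1 / ((N₁ : ℝ) * 2 ^ lam) : ℝ) : EReal) *
    sSup {v : EReal | ∃ Rv : Fin (2 ^ lam) → ℝ,
      (∀ i, Rv i ∈ Set.Icc (0 : ℝ) 1 ∧ ∃ k : ℤ, Rv i * (N₁ : ℝ) = (k : ℝ)) ∧
      (∑ i, Rv i) = 2 ^ lam * R ∧
      v = nlog (∑ i : Fin (2 ^ lam), dexp (N₁ : ℝ) (EchanN (subch W lam (i : ℕ)) (Rv i) N₁))}

/-- The asymptotic exponent `E_λ(W, R)`, defined recursively;
`E_λ(W,R) = 0` for `R > 1` by convention. -/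
noncomputable def ElamInf : PreChannel → ℕ → ℝ → EReal
  | W, 0, R => Echan W R
  | W, l + 1, R =>
      if 1 < R then 0
      else ((1 / 2 : ℝ) : EReal) *
        sSup {v : EReal | ∃ R₁ ∈ Set.Icc (max 0 (2 * R - 1)) (min 1 (2 * R)),
          v = min (ElamInf W.minus l R₁) (ElamInf W.plus l (2 * R - R₁))}

/-- `V_λ(W) = (Σᵢ √V(Wᵢ))² / 2^λ`. -/
noncomputable def Vlam (W : PreChannel) (lam : ℕ) : ℝ :=
  (∑ i ∈ Finset.range (2 ^ lam), Real.sqrt (disp (subch W lam i))) ^ 2 / 2 ^ lam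

end PreChannel

/-- Binary entropy function (base 2), with `h2 0 = h2 1 = 0`. -/
noncomputable def h2 (x : ℝ) : ℝ := -x * Real.logb 2 x - (1 - x) * Real.logb 2 (1 - x)

/-- Inverse of the binary entropy function, with values in `[0, 1/2]`. -/
noncomputable def h2inv (v : ℝ) : ℝ := Function.invFunOn h2 (Set.Icc 0 (1 / 2)) v

/-- `ε_h(x) = x − x²`. -/
noncomputable def epsh (x : ℝ) : ℝ := x - x ^ 2

/-- `ε_l(x) = x − 1 + h₂(h₂⁻¹(1−x)·[2 − 2 h₂⁻¹(1−x)])`. -/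
noncomputable def epsl (x : ℝ) : ℝ :=
  x - 1 + h2 (h2inv (1 - x) * (2 - 2 * h2inv (1 - x)))

/-- The binary symmetric channel with crossover probability `p`. -/
noncomputable def BSC (p : ℝ) : PreChannel where
  Y := Bool
  fin := inferInstance
  W := fun x y => if y = x then 1 - p else p

/-- The binary erasure channel with erasure probability `δ` (`none` = erasure). -/
noncomputable def BEC (δ : ℝ) : PreChannel where
  Y := Option Bool
  fin := inferInstance
  W := fun x y => match y with
    | none => δ
    | some b => if b = x then 1 - δ else 0

/-- The channel-independent lower bound `Ê_λ(I, R)`. -/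
noncomputable def Ehat : ℕ → ℝ → ℝ → EReal
  | 0, I, R => PreChannel.Echan (BSC (h2inv (1 - I))) R
  | l + 1, I, R =>
      ((1 / 2 : ℝ) : EReal) *
        sInf {w : EReal | ∃ ε ∈ Set.Icc (epsl I) (epsh I),
          w = sSup {v : EReal | ∃ R₁ ∈ Set.Icc (max 0 (2 * R - 1)) (min 1 (2 * R)),
            v = min (Ehat l (I - ε) R₁) (Ehat l (I + ε) (2 * R - R₁))}}

/-- The Gaussian Q-function. -/
noncomputable def gaussQ (u : ℝ) : ℝ :=
  ∫ t in Set.Ioi u, (Real.sqrt (2 * Real.pi))⁻¹ * Real.exp (-t ^ 2 / 2)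

open PreChannel

open Set Filter Topology

namespace Stmt4Aux

lemma coe_max' (a b : ℝ) : ((max a b : ℝ) : EReal) = max (a : EReal) (b : EReal) := by
  rcases le_total a b with h | h
  · rw [max_eq_right h, max_eq_right (EReal.coe_le_coe_iff.mpr h)]
  · rw [max_eq_left h, max_eq_left (EReal.coe_le_coe_iff.mpr h)]

lemma coe_le_of_tendsto {u : ℕ → ℝ} {c : ℝ} {z : EReal}
    (hz : ∀ n, (u n : EReal) ≤ z) (hu : Tendsto u atTop (𝓝 c)) : (c : EReal) ≤ z := by
  by_contra h
  push_neg at h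
  induction z with
  | bot => exact EReal.coe_ne_bot (u 0) (le_bot_iff.mp (hz 0))
  | top => exact (lt_irrefl _ (h.trans_le le_top))
  | coe r =>
    have hrc : r < c := EReal.coe_lt_coe_iff.mp h
    obtain ⟨n, hn⟩ := (hu.eventually (eventually_gt_nhds hrc)).exists
    exact absurd (EReal.coe_le_coe_iff.mp (hz n)) (not_le.mpr hn)

/-- Gluing a convex function on `(0,1]` that vanishes on `[1,∞)`. -/
lemma convexOn_glue {φ : ℝ → ℝ}
    (h0 : ∀ x : ℝ, 0 < x → 0 ≤ φ x)
    (h1 : ∀ x : ℝ, 1 ≤ x → φ x = 0)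
    (hc : ConvexOn ℝ (Ioc (0:ℝ) 1) φ) : ConvexOn ℝ (Ioi (0:ℝ)) φ := by
  refine ⟨convex_Ioi 0, ?_⟩
  suffices H : ∀ x : ℝ, x ∈ Ioi (0:ℝ) → ∀ y ∈ Ioi (0:ℝ), x ≤ y → ∀ a b : ℝ,
      0 ≤ a → 0 ≤ b → a + b = 1 → φ (a * x + b * y) ≤ a * φ x + b * φ y by
    intro x hx y hy a b ha hb hab
    rcases le_total x y with h | h
    · simpa [smul_eq_mul] using H x hx y hy h a b ha hb hab
    · have := H y hy x hx h b a hb ha (by linarith)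
      simp only [smul_eq_mul]
      rw [add_comm (a*x), add_comm (a * φ x)]
      exact this
  intro x hx y hy hxy a b ha hb hab
  simp only [mem_Ioi] at hx hy
  rcases le_or_gt y 1 with hy1 | hy1
  · have := hc.2 (show x ∈ Ioc (0:ℝ) 1 from ⟨hx, hxy.trans hy1⟩)
      (show y ∈ Ioc (0:ℝ) 1 from ⟨hy, hy1⟩) ha hb hab
    simpa [smul_eq_mul] using this
  rcases le_or_gt 1 x with hx1 | hx1
  · have hz : (1:ℝ) ≤ a * x + b * y := by nlinarith
    rw [h1 _ hz, h1 _ hx1, h1 _ (by linarith : (1:ℝ) ≤ y)]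
    norm_num
  -- x < 1 < y
  obtain ⟨z, hzdef⟩ : ∃ z : ℝ, z = a * x + b * y := ⟨_, rfl⟩
  rw [← hzdef]
  rcases le_or_gt 1 z with hz1 | hz1
  · rw [h1 _ hz1, h1 _ hy1.le]
    have := h0 x hx
    nlinarith
  · -- z < 1
    have hxz : x ≤ z := by nlinarith
    have hzpos : 0 < z := lt_of_lt_of_le hx hxz
    obtain ⟨θ, hθdef⟩ : ∃ θ : ℝ, θ = (1 - z) / (1 - x) := ⟨_, rfl⟩
    have hx1' : (0:ℝ) < 1 - x := by linarith
    have hθ0 : 0 ≤ θ := hθdef ▸ div_nonneg (by linarith) hx1'.le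
    have hθ1 : θ ≤ 1 := by
      rw [hθdef, div_le_one hx1']; linarith
    have hmul : θ * (1 - x) = 1 - z := by
      rw [hθdef]; exact div_mul_cancel₀ _ (ne_of_gt hx1')
    have hcomb : θ * x + (1 - θ) = z := by nlinarith [hmul]
    have h2 := hc.2 (show x ∈ Ioc (0:ℝ) 1 from ⟨hx, hx1.le⟩)
      (show (1:ℝ) ∈ Ioc (0:ℝ) 1 from ⟨one_pos, le_refl 1⟩)
      hθ0 (by linarith : (0:ℝ) ≤ 1 - θ) (by ring : θ + (1 - θ) = 1)
    simp only [smul_eq_mul, mul_one, h1 1 (le_refl 1)] at h2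
    rw [hcomb] at h2
    -- θ ≤ a
    have hθa : θ ≤ a := by
      rw [hθdef, div_le_iff₀ hx1']
      nlinarith [mul_nonneg hb (by linarith : (0:ℝ) ≤ y - 1), hzdef]
    have hφx := h0 x hx
    calc φ z ≤ θ * φ x + (1 - θ) * 0 := h2
      _ = θ * φ x := by ring
      _ ≤ a * φ x := by nlinarith
      _ ≤ a * φ x + b * φ y := by rw [h1 _ hy1.le]; simp

lemma anti_of_convex {φ : ℝ → ℝ} (hc : ConvexOn ℝ (Ioi (0:ℝ)) φ)
    (h1 : ∀ x : ℝ, 1 ≤ x → φ x = 0) (h0 : ∀ x : ℝ, 0 < x → 0 ≤ φ x) :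
    ∀ x y : ℝ, 0 < x → x ≤ y → φ y ≤ φ x := by
  intro x y hx hxy
  rcases eq_or_lt_of_le hxy with rfl | hlt
  · exact le_refl _
  obtain ⟨z, hzdef⟩ : ∃ z : ℝ, z = max (y + 1) 2 := ⟨_, rfl⟩
  have hz1 : (1:ℝ) ≤ z := hzdef ▸ le_trans (by norm_num) (le_max_right _ _)
  have hzy : y < z := hzdef ▸ lt_of_lt_of_le (by linarith) (le_max_left _ _)
  obtain ⟨θ, hθdef⟩ : ∃ θ : ℝ, θ = (z - y) / (z - x) := ⟨_, rfl⟩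
  have hzx : (0:ℝ) < z - x := by linarith
  have hθ0 : 0 ≤ θ := hθdef ▸ div_nonneg (by linarith) hzx.le
  have hθ1 : θ ≤ 1 := by rw [hθdef, div_le_one hzx]; linarith
  have hmul : θ * (z - x) = z - y := by
    rw [hθdef]; exact div_mul_cancel₀ _ (ne_of_gt hzx)
  have hmul' : θ * z - θ * x = z - y := by rw [← mul_sub]; exact hmul
  have hcomb : θ * x + (1 - θ) * z = y := by nlinarith [hmul']
  have h2 := hc.2 (show x ∈ Ioi (0:ℝ) from hx)
    (show z ∈ Ioi (0:ℝ) from by simp only [mem_Ioi]; linarith)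
    hθ0 (by linarith : (0:ℝ) ≤ 1 - θ) (by ring : θ + (1 - θ) = 1)
  simp only [smul_eq_mul, h1 z hz1, mul_zero, add_zero] at h2
  rw [hcomb] at h2
  have := h0 x hx
  nlinarith

/-- The invariant carried through the recursion. -/
structure GoodW (f : ℝ → EReal) (φ : ℝ → ℝ) (C : ℝ) : Prop where
  coe : ∀ R : ℝ, 0 < R → f R = (φ R : EReal)
  top0 : f 0 = ⊤
  nonneg : ∀ R : ℝ, 0 < R → 0 ≤ φ R
  zero1 : ∀ R : ℝ, 1 ≤ R → φ R = 0
  conv : ConvexOn ℝ (Ioi (0:ℝ)) φ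
  lin : ∀ R : ℝ, 0 < R → R ≤ 1 → φ R ≤ C * (1 - R)
  Cnn : 0 ≤ C

namespace GoodW

variable {f : ℝ → EReal} {φ : ℝ → ℝ} {C : ℝ}

lemma anti (h : GoodW f φ C) : ∀ x y : ℝ, 0 < x → x ≤ y → φ y ≤ φ x :=
  anti_of_convex h.conv h.zero1 h.nonneg

lemma antiE (h : GoodW f φ C) {x y : ℝ} (hx : 0 ≤ x) (hxy : x ≤ y) : f y ≤ f x := by
  rcases eq_or_lt_of_le hx with rfl | hx'
  · rw [h.top0]; exact le_top
  · rw [h.coe x hx', h.coe y (lt_of_lt_of_le hx' hxy)]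
    exact EReal.coe_le_coe_iff.mpr (h.anti x y hx' hxy)

lemma cont (h : GoodW f φ C) : ContinuousOn φ (Ioi (0:ℝ)) :=
  h.conv.continuousOn isOpen_Ioi

lemma fnonneg (h : GoodW f φ C) {R : ℝ} (hR : 0 ≤ R) : (0 : EReal) ≤ f R := by
  rcases eq_or_lt_of_le hR with rfl | hR'
  · rw [h.top0]; exact le_top
  · rw [h.coe R hR']
    exact_mod_cast h.nonneg R hR'

end GoodW

/-! ### Level sets and inverse functions -/

/-- upper level set of `f` within `[0,1]`. -/
def lset (f : ℝ → EReal) (c : ℝ) : Set ℝ := {A | A ∈ Icc (0:ℝ) 1 ∧ (c : EReal) ≤ f A}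

/-- "inverse" of an antitone `f`. -/
noncomputable def ginv (f : ℝ → EReal) (c : ℝ) : ℝ := sSup (lset f c)

section LevelSet

variable {f : ℝ → EReal} {φ : ℝ → ℝ} {C : ℝ} (h : GoodW f φ C)
include h

lemma zero_mem_lset (c : ℝ) : (0:ℝ) ∈ lset f c := by
  refine ⟨⟨le_refl 0, zero_le_one⟩, ?_⟩
  rw [h.top0]; exact le_top

omit h in
lemma lset_bdd (c : ℝ) : BddAbove (lset f c) := ⟨1, fun A hA => hA.1.2⟩

omit h in
lemma lset_subset_Icc (c : ℝ) : lset f c ⊆ Icc (0:ℝ) 1 := fun A hA => hA.1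

lemma lset_down {c : ℝ} {A A' : ℝ} (hA' : A' ∈ Icc (0:ℝ) 1) (hA : A ∈ lset f c)
    (hle : A' ≤ A) : A' ∈ lset f c := by
  refine ⟨hA', ?_⟩
  exact le_trans hA.2 (h.antiE hA'.1 hle)

lemma ginv_nonneg (c : ℝ) : 0 ≤ ginv f c := le_csSup (lset_bdd (f := f) c) (zero_mem_lset h c)

lemma ginv_le_one (c : ℝ) : ginv f c ≤ 1 :=
  csSup_le ⟨0, zero_mem_lset h c⟩ (fun A hA => hA.1.2)

lemma ginv_anti {c c' : ℝ} (hcc : c ≤ c') : ginv f c' ≤ ginv f c := by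
  apply csSup_le ⟨0, zero_mem_lset h c'⟩
  intro A hA
  exact le_csSup (lset_bdd (f := f) c) ⟨hA.1, le_trans (by exact_mod_cast hcc) hA.2⟩

lemma ginv_zero {c : ℝ} (hc : c ≤ 0) : ginv f c = 1 := by
  have hmem : (1:ℝ) ∈ lset f c := by
    refine ⟨⟨zero_le_one, le_refl 1⟩, ?_⟩
    calc (c : EReal) ≤ (0:ℝ) := by exact_mod_cast hc
    _ ≤ f 1 := h.fnonneg zero_le_one
  exact le_antisymm (ginv_le_one h c) (le_csSup (lset_bdd (f := f) c) hmem)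

/-- The sup of the level set is a member (closedness, via continuity of `φ`). -/
lemma ginv_mem (c : ℝ) : ginv f c ∈ lset f c := by
  have h0 := zero_mem_lset h c (f := f)
  have hbdd := lset_bdd (f := f) c
  rcases eq_or_lt_of_le (ginv_nonneg h c) with heq | hpos
  · rw [← heq]; exact h0
  refine ⟨⟨(ginv_nonneg h c), ginv_le_one h c⟩, ?_⟩
  rw [h.coe _ hpos]
  obtain ⟨u, hu_mono, hu_tend, hu_mem⟩ := exists_seq_tendsto_sSup ⟨0, h0⟩ hbdd
  have hcw : ContinuousWithinAt φ (Ioi (0:ℝ)) (ginv f c) := h.cont _ hpos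
  -- eventually u n > 0
  have hev : ∀ᶠ n in atTop, u n ∈ Ioi (0:ℝ) :=
    hu_tend.eventually (eventually_gt_nhds hpos)
  have htend2 : Tendsto u atTop (𝓝[Ioi (0:ℝ)] (ginv f c)) := by
    rw [tendsto_nhdsWithin_iff]; exact ⟨hu_tend, hev⟩
  have htendφ : Tendsto (fun n => φ (u n)) atTop (𝓝 (φ (ginv f c))) :=
    hcw.tendsto.comp htend2
  have hbound : ∀ᶠ n in atTop, c ≤ φ (u n) := by
    filter_upwards [hev] with n hn
    have := (hu_mem n).2
    rw [h.coe _ hn] at this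
    exact_mod_cast this
  have : c ≤ φ (ginv f c) := ge_of_tendsto htendφ hbound
  exact_mod_cast this

lemma mem_of_le_ginv {c A : ℝ} (hA : A ∈ Icc (0:ℝ) 1) (hle : A ≤ ginv f c) :
    A ∈ lset f c := lset_down h hA (ginv_mem h c) hle

/-- Convexity of the inverse function on nonnegative levels. -/
lemma ginv_conv {c1 c2 s : ℝ} (hc1 : 0 ≤ c1) (hc12 : c1 ≤ c2) (hs0 : 0 < s) (hs1 : s < 1) :
    ginv f (s * c1 + (1 - s) * c2) ≤ s * ginv f c1 + (1 - s) * ginv f c2 := by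
  obtain ⟨c, hcdef⟩ : ∃ c : ℝ, c = s * c1 + (1 - s) * c2 := ⟨_, rfl⟩
  rw [← hcdef]
  have hc1c : c1 ≤ c := by nlinarith
  have hcc2 : c ≤ c2 := by nlinarith
  apply csSup_le ⟨0, zero_mem_lset h c⟩
  intro A hA
  have hA1 : A ≤ ginv f c1 :=
    le_csSup (lset_bdd (f := f) c1) ⟨hA.1, le_trans (by exact_mod_cast hc1c) hA.2⟩
  by_cases hA2 : A ≤ ginv f c2
  · nlinarith [ginv_nonneg h c1, ginv_nonneg h c2]
  push_neg at hA2
  -- key : approximate bound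
  have key : ∀ ε : ℝ, 0 < ε → ε < A - ginv f c2 →
      A ≤ s * ginv f c1 + (1 - s) * ginv f c2 + (1 - s) * ε := by
    intro ε hε hεA
    obtain ⟨B2, hB2def⟩ : ∃ B2 : ℝ, B2 = ginv f c2 + ε := ⟨_, rfl⟩
    have hB2pos : 0 < B2 := by have := ginv_nonneg h c2; rw [hB2def]; linarith
    have hB2A : B2 < A := by rw [hB2def]; linarith
    have hA01 : A ∈ Icc (0:ℝ) 1 := hA.1
    have hB2I : B2 ∈ Icc (0:ℝ) 1 := ⟨hB2pos.le, le_trans hB2A.le hA01.2⟩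
    have hB2not : B2 ∉ lset f c2 := by
      intro hmem
      have hle : B2 ≤ ginv f c2 := le_csSup (lset_bdd (f := f) c2) hmem
      rw [hB2def] at hle; linarith
    have hφB2 : φ B2 < c2 := by
      by_contra hcon
      push_neg at hcon
      exact hB2not ⟨hB2I, by rw [h.coe _ hB2pos]; exact_mod_cast hcon⟩
    have hApos : 0 < A := lt_trans hB2pos hB2A
    have hφA : c ≤ φ A := by
      have := hA.2; rw [h.coe _ hApos] at this; exact_mod_cast this
    obtain ⟨A'', hA''def⟩ : ∃ A'' : ℝ, A'' = (A - (1 - s) * B2) / s := ⟨_, rfl⟩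
    have hs1' : (0:ℝ) < 1 - s := by linarith
    have hcombA : s * A'' + (1 - s) * B2 = A := by
      rw [hA''def]; field_simp; ring
    have hA''A : A < A'' := by
      have : s * A'' = A - (1 - s) * B2 := by linarith [hcombA]
      nlinarith
    rcases le_or_gt A'' 1 with hA''1 | hA''1
    · -- convexity of φ at B2 < A < A''
      have h2 := h.conv.2 (show A'' ∈ Ioi (0:ℝ) from lt_trans hApos hA''A)
        (show B2 ∈ Ioi (0:ℝ) from hB2pos)
        hs0.le (by linarith : (0:ℝ) ≤ 1 - s) (by ring : s + (1 - s) = 1)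
      simp only [smul_eq_mul] at h2
      rw [hcombA] at h2
      have hφA'' : c1 ≤ φ A'' := by nlinarith
      have hA''mem : A'' ∈ lset f c1 := by
        refine ⟨⟨by linarith, hA''1⟩, ?_⟩
        rw [h.coe _ (lt_trans hApos hA''A)]
        exact_mod_cast hφA''
      have hA''le : A'' ≤ ginv f c1 := le_csSup (lset_bdd (f := f) c1) hA''mem
      calc A = s * A'' + (1 - s) * B2 := hcombA.symm
        _ ≤ s * ginv f c1 + (1 - s) * (ginv f c2 + ε) := by
            rw [← hB2def]; nlinarith
        _ = s * ginv f c1 + (1 - s) * ginv f c2 + (1 - s) * ε := by ring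
    · -- A'' > 1 : contradiction with c1 ≥ 0
      exfalso
      obtain ⟨β, hβdef⟩ : ∃ β : ℝ, β = (A - s) / (1 - s) := ⟨_, rfl⟩
      have hβmul : β * (1 - s) = A - s := by
        rw [hβdef]; exact div_mul_cancel₀ _ (ne_of_gt hs1')
      have hβB2 : B2 < β := by
        -- from A'' > 1 : A - (1-s)*B2 > s
        have : A - (1 - s) * B2 > s := by
          have := hA''def ▸ hA''1
          calc s = s * 1 := by ring
          _ < s * A'' := by nlinarith
          _ = A - (1 - s) * B2 := by linarith [hcombA]
        nlinarith
      have hβ1 : β ≤ 1 := by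
        rw [hβdef, div_le_one hs1']; linarith [hA01.2]
      have hβpos : 0 < β := lt_trans hB2pos hβB2
      have hcombβ : s + (1 - s) * β = A := by
        rw [mul_comm] at hβmul; linarith
      have h2 := h.conv.2 (show (1:ℝ) ∈ Ioi (0:ℝ) from by norm_num)
        (show β ∈ Ioi (0:ℝ) from hβpos)
        hs0.le (by linarith : (0:ℝ) ≤ 1 - s) (by ring : s + (1 - s) = 1)
      simp only [smul_eq_mul, mul_one] at h2
      rw [hcombβ] at h2
      rw [h.zero1 1 (le_refl 1)] at h2
      have hφβ : φ β ≤ φ B2 := h.anti B2 β hB2pos hβB2.le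
      nlinarith
  -- conclude from key
  by_contra hcon
  push_neg at hcon
  obtain ⟨d, hddef⟩ : ∃ d : ℝ, d = A - (s * ginv f c1 + (1 - s) * ginv f c2) := ⟨_, rfl⟩
  have hd : 0 < d := by rw [hddef]; linarith
  obtain ⟨ε, hεdef⟩ : ∃ ε : ℝ, ε = min (d / 2) ((A - ginv f c2) / 2) := ⟨_, rfl⟩
  have hε1 : 0 < ε := by
    rw [hεdef]; apply lt_min (by linarith) (by linarith)
  have hε2 : ε < A - ginv f c2 := by
    rw [hεdef]
    calc min (d/2) ((A - ginv f c2)/2) ≤ (A - ginv f c2)/2 := min_le_right _ _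
    _ < A - ginv f c2 := by linarith
  have := key ε hε1 hε2
  have hεd : (1 - s) * ε ≤ d / 2 := by
    have h1 : ε ≤ d / 2 := hεdef ▸ min_le_left _ _
    nlinarith
  rw [hddef] at hd
  linarith

end LevelSet

/-! ### The recursion step -/

/-- The set appearing in the recursive definition of `E_λ`. -/
def Mset (G H : ℝ → EReal) (R : ℝ) : Set EReal :=
  {v : EReal | ∃ R₁ ∈ Icc (max 0 (2*R-1)) (min 1 (2*R)), v = min (G R₁) (H (2*R - R₁))}

noncomputable def MM (G H : ℝ → EReal) (R : ℝ) : EReal := sSup (Mset G H R)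

noncomputable def muu (G H : ℝ → EReal) (R : ℝ) : ℝ := (MM G H R).toReal

noncomputable def psi (G H : ℝ → EReal) (c : ℝ) : ℝ := ginv G c + ginv H c

section TwoFun

variable {G H : ℝ → EReal} {φg φh : ℝ → ℝ} {Cg Ch : ℝ}
variable (hG : GoodW G φg Cg) (hH : GoodW H φh Ch)
include hG hH

lemma psi_zero_le {c : ℝ} (hc : c ≤ 0) : psi G H c = 2 := by
  rw [psi, ginv_zero hG hc, ginv_zero hH hc]; norm_num

lemma psi_conv {c1 c2 s : ℝ} (hc1 : 0 ≤ c1) (hc12 : c1 ≤ c2) (hs0 : 0 < s) (hs1 : s < 1) :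
    psi G H (s * c1 + (1 - s) * c2) ≤ s * psi G H c1 + (1 - s) * psi G H c2 := by
  have h1 := ginv_conv hG hc1 hc12 hs0 hs1
  have h2 := ginv_conv hH hc1 hc12 hs0 hs1
  simp only [psi]; linarith

lemma psi_csSup {D : Set ℝ} (hne : D.Nonempty) (hbdd : BddAbove D) {r : ℝ}
    (hr : ∀ c' ∈ D, r ≤ psi G H c') : r ≤ psi G H (sSup D) := by
  obtain ⟨u, humono, hutend, humem⟩ := exists_seq_tendsto_sSup hne hbdd
  have hbd1 : BddBelow (Set.range fun n => ginv G (u n)) :=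
    ⟨0, by rintro x ⟨n, rfl⟩; exact ginv_nonneg hG _⟩
  have hbd2 : BddBelow (Set.range fun n => ginv H (u n)) :=
    ⟨0, by rintro x ⟨n, rfl⟩; exact ginv_nonneg hH _⟩
  have hga : Antitone fun n => ginv G (u n) := fun m n hmn => ginv_anti hG (humono hmn)
  have hha : Antitone fun n => ginv H (u n) := fun m n hmn => ginv_anti hH (humono hmn)
  have htga := tendsto_atTop_ciInf hga hbd1
  have htha := tendsto_atTop_ciInf hha hbd2
  obtain ⟨Lg, hLgdef⟩ : ∃ Lg, Lg = ⨅ n, ginv G (u n) := ⟨_, rfl⟩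
  obtain ⟨Lh, hLhdef⟩ : ∃ Lh, Lh = ⨅ n, ginv H (u n) := ⟨_, rfl⟩
  have hLg_le : ∀ n, Lg ≤ ginv G (u n) := fun n => hLgdef ▸ ciInf_le hbd1 n
  have hLh_le : ∀ n, Lh ≤ ginv H (u n) := fun n => hLhdef ▸ ciInf_le hbd2 n
  have hLgI : Lg ∈ Icc (0:ℝ) 1 := by
    constructor
    · rw [hLgdef]; exact le_ciInf fun n => ginv_nonneg hG _
    · exact (hLg_le 0).trans (ginv_le_one hG _)
  have hLhI : Lh ∈ Icc (0:ℝ) 1 := by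
    constructor
    · rw [hLhdef]; exact le_ciInf fun n => ginv_nonneg hH _
    · exact (hLh_le 0).trans (ginv_le_one hH _)
  have hLg_mem : Lg ∈ lset G (sSup D) := by
    refine ⟨hLgI, ?_⟩
    exact coe_le_of_tendsto (fun n => (mem_of_le_ginv hG hLgI (hLg_le n)).2) hutend
  have hLh_mem : Lh ∈ lset H (sSup D) := by
    refine ⟨hLhI, ?_⟩
    exact coe_le_of_tendsto (fun n => (mem_of_le_ginv hH hLhI (hLh_le n)).2) hutend
  have h1 : Lg ≤ ginv G (sSup D) := le_csSup (lset_bdd (f := G) _) hLg_mem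
  have h2 : Lh ≤ ginv H (sSup D) := le_csSup (lset_bdd (f := H) _) hLh_mem
  have h3 : r ≤ Lg + Lh := by
    rw [hLgdef, hLhdef]
    refine ge_of_tendsto (htga.add htha) ?_
    exact Filter.Eventually.of_forall fun n => hr (u n) (humem n)
  simp only [psi]; linarith

lemma elem_level {r c' : ℝ} (hr0 : 0 < r) (hr1 : r ≤ 1) (hc' : 0 ≤ c')
    (hψ : 2*r ≤ psi G H c') : (c' : EReal) ≤ MM G H r := by
  have hg0 := ginv_nonneg hG c'
  have hh0 := ginv_nonneg hH c'
  have hg1 := ginv_le_one hG c'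
  have hh1 := ginv_le_one hH c'
  rw [psi] at hψ
  obtain ⟨A, hAdef⟩ : ∃ A : ℝ, A = max (2*r - ginv H c') (max 0 (2*r - 1)) := ⟨_, rfl⟩
  have hA0 : 0 ≤ A := by rw [hAdef]; exact le_trans (le_max_left 0 _) (le_max_right _ _)
  have hAg : A ≤ ginv G c' := by
    rw [hAdef]
    apply max_le (by linarith)
    exact max_le hg0 (by linarith)
  have hA1 : A ≤ 1 := hAg.trans hg1
  have hAlo : max 0 (2*r-1) ≤ A := hAdef ▸ le_max_right _ _
  have hA2r : A ≤ 2*r := by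
    rw [hAdef]
    exact max_le (by linarith) (max_le (by linarith) (by linarith))
  have hAhi : A ≤ min 1 (2*r) := le_min hA1 hA2r
  have hmem : min (G A) (H (2*r - A)) ∈ Mset G H r := ⟨A, ⟨hAlo, hAhi⟩, rfl⟩
  refine le_trans (le_min ?_ ?_) (le_sSup hmem)
  · exact (mem_of_le_ginv hG ⟨hA0, hA1⟩ hAg).2
  · have h1 : 2*r - A ≤ ginv H c' := by
      rw [hAdef]
      have := le_max_left (2*r - ginv H c') (max 0 (2*r-1))
      linarith [le_max_left (2*r - ginv H c') (max 0 (2*r-1))]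
    exact (mem_of_le_ginv hH ⟨by linarith, h1.trans hh1⟩ h1).2

omit hG hH in
lemma self_mem_Mset {R : ℝ} (hr0 : 0 ≤ R) (hr1 : R ≤ 1) :
    min (G R) (H R) ∈ Mset G H R := by
  refine ⟨R, ⟨max_le hr0 (by linarith), le_min hr1 (by linarith)⟩, ?_⟩
  rw [show 2*R - R = R by ring]

lemma MM_nonneg {R : ℝ} (hr0 : 0 < R) (hr1 : R ≤ 1) : (0:EReal) ≤ MM G H R :=
  le_trans (le_min (hG.fnonneg hr0.le) (hH.fnonneg hr0.le))
    (le_sSup (self_mem_Mset hr0.le hr1))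

lemma MM_le {R : ℝ} (hr0 : 0 < R) : MM G H R ≤ ((max (φg R) (φh R) : ℝ) : EReal) := by
  apply sSup_le
  rintro v ⟨R₁, hR₁, rfl⟩
  rcases le_total R R₁ with hc | hc
  · refine le_trans (min_le_left _ _) (le_trans (hG.antiE hr0.le hc) ?_)
    rw [hG.coe _ hr0]
    exact_mod_cast le_max_left _ _
  · have hcc : R ≤ 2*R - R₁ := by linarith
    refine le_trans (min_le_right _ _) (le_trans (hH.antiE hr0.le hcc) ?_)
    rw [hH.coe _ hr0]
    exact_mod_cast le_max_right _ _

lemma MM_ne_top {R : ℝ} (hr0 : 0 < R) : MM G H R ≠ ⊤ :=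
  ((MM_le hG hH hr0).trans_lt (EReal.coe_lt_top _)).ne

lemma MM_ne_bot {R : ℝ} (hr0 : 0 < R) (hr1 : R ≤ 1) : MM G H R ≠ ⊥ := by
  have := MM_nonneg hG hH hr0 hr1
  exact fun hbot => by simp [hbot] at this

lemma MM_coe {R : ℝ} (hr0 : 0 < R) (hr1 : R ≤ 1) :
    MM G H R = ((muu G H R : ℝ) : EReal) :=
  (EReal.coe_toReal (MM_ne_top hG hH hr0) (MM_ne_bot hG hH hr0 hr1)).symm

lemma muu_nonneg {R : ℝ} (hr0 : 0 < R) (hr1 : R ≤ 1) : 0 ≤ muu G H R := by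
  have h1 := MM_nonneg hG hH hr0 hr1
  rw [MM_coe hG hH hr0 hr1] at h1
  exact_mod_cast h1

lemma muu_le {R : ℝ} (hr0 : 0 < R) (hr1 : R ≤ 1) : muu G H R ≤ max (φg R) (φh R) := by
  have h1 := MM_le hG hH (R := R) hr0
  rw [MM_coe hG hH hr0 hr1] at h1
  exact_mod_cast h1

/-- The main convexity estimate for the recursion. -/
lemma main_comb {Ra Rb t : ℝ} (hRa : 0 < Ra) (hRa1 : Ra ≤ 1) (hRb : 0 < Rb) (hRb1 : Rb ≤ 1)
    (hab : Ra ≤ Rb) (ht : 0 < t) (ht1 : t < 1) :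
    MM G H (t*Ra + (1-t)*Rb) ≤ ((t * muu G H Ra + (1-t) * muu G H Rb : ℝ) : EReal) := by
  obtain ⟨R, hRdef⟩ : ∃ R : ℝ, R = t*Ra + (1-t)*Rb := ⟨_, rfl⟩
  rw [← hRdef]
  have hR0 : 0 < R := by nlinarith
  have hR1 : R ≤ 1 := by nlinarith
  have hRaR : Ra ≤ R := by nlinarith
  have hRRb : R ≤ Rb := by nlinarith
  have hμa0 := muu_nonneg hG hH hRa hRa1
  have hμb0 := muu_nonneg hG hH hRb hRb1
  obtain ⟨RHS, hRHSdef⟩ : ∃ r : ℝ, r = t * muu G H Ra + (1-t) * muu G H Rb := ⟨_, rfl⟩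
  rw [← hRHSdef]
  have hRHS0 : 0 ≤ RHS := by nlinarith
  apply sSup_le
  rintro v ⟨x, hx, rfl⟩
  have hx0 : 0 ≤ x := le_trans (le_max_left 0 _) hx.1
  have hxlo : 2*R - 1 ≤ x := le_trans (le_max_right 0 _) hx.1
  have hx1 : x ≤ 1 := hx.2.trans (min_le_left _ _)
  have hx2R : x ≤ 2*R := hx.2.trans (min_le_right _ _)
  have hy0 : 0 ≤ 2*R - x := by linarith
  have hy1 : 2*R - x ≤ 1 := by linarith
  rcases le_or_gt (min (G x) (H (2*R - x))) 0 with hv0 | hv0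
  · exact le_trans hv0 (by exact_mod_cast hRHS0)
  have hvtop : min (G x) (H (2*R - x)) ≠ ⊤ := by
    rcases lt_or_ge 0 x with hxpos | hxneg
    · intro htop
      have h1 : G x = ⊤ := by
        have := min_le_left (G x) (H (2*R - x))
        rw [htop] at this
        exact top_le_iff.mp this
      rw [hG.coe _ hxpos] at h1
      exact EReal.coe_ne_top _ h1
    · have hxz : x = 0 := le_antisymm hxneg hx0
      intro htop
      have h1 : H (2*R - x) = ⊤ := by
        have := min_le_right (G x) (H (2*R - x))
        rw [htop] at this
        exact top_le_iff.mp this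
      rw [hH.coe _ (by rw [hxz]; linarith)] at h1
      exact EReal.coe_ne_top _ h1
  have hvbot : min (G x) (H (2*R - x)) ≠ ⊥ := fun hbot => by simp [hbot] at hv0
  obtain ⟨c, hvc⟩ : ∃ c : ℝ, min (G x) (H (2*R - x)) = (c : EReal) :=
    ⟨_, (EReal.coe_toReal hvtop hvbot).symm⟩
  have hc0 : 0 ≤ c := by
    rw [hvc] at hv0
    exact_mod_cast hv0.le
  have hcx : (c : EReal) ≤ G x := hvc ▸ min_le_left _ _
  have hcy : (c : EReal) ≤ H (2*R - x) := hvc ▸ min_le_right _ _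
  have hxg : x ≤ ginv G c := le_csSup (lset_bdd (f := G) c) ⟨⟨hx0, hx1⟩, hcx⟩
  have hyh : 2*R - x ≤ ginv H c := le_csSup (lset_bdd (f := H) c) ⟨⟨hy0, hy1⟩, hcy⟩
  have hψc : 2*R ≤ psi G H c := by rw [psi]; linarith
  rw [hvc]
  suffices hfinal : c ≤ RHS by exact_mod_cast hfinal
  obtain ⟨D, hDdef⟩ : ∃ D : Set ℝ, D = {c' : ℝ | c' ∈ Icc 0 c ∧ 2*Rb ≤ psi G H c'} := ⟨_, rfl⟩
  have hD0 : (0:ℝ) ∈ D := by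
    rw [hDdef]
    exact ⟨⟨le_refl 0, hc0⟩, by rw [psi_zero_le hG hH (le_refl 0)]; linarith⟩
  have hDbdd : BddAbove D := ⟨c, fun z hz => by rw [hDdef] at hz; exact hz.1.2⟩
  obtain ⟨cb, hcbdef⟩ : ∃ cb : ℝ, cb = sSup D := ⟨_, rfl⟩
  have hcb0 : 0 ≤ cb := hcbdef ▸ le_csSup hDbdd hD0
  have hcbc : cb ≤ c := hcbdef ▸ csSup_le ⟨0, hD0⟩ (fun z hz => by rw [hDdef] at hz; exact hz.1.2)
  have hcbψ : 2*Rb ≤ psi G H cb := by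
    rw [hcbdef]
    exact psi_csSup hG hH ⟨0, hD0⟩ hDbdd (fun c' hc' => by rw [hDdef] at hc'; exact hc'.2)
  have toRealRa : ∀ c' : ℝ, (c' : EReal) ≤ MM G H Ra → c' ≤ muu G H Ra := by
    intro c' hle
    rw [MM_coe hG hH hRa hRa1] at hle
    exact_mod_cast hle
  have toRealRb : ∀ c' : ℝ, (c' : EReal) ≤ MM G H Rb → c' ≤ muu G H Rb := by
    intro c' hle
    rw [MM_coe hG hH hRb hRb1] at hle
    exact_mod_cast hle
  rcases eq_or_lt_of_le hcbc with heq | hlt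
  · have hψRa : 2*Ra ≤ psi G H c := by
      rw [← heq]; linarith
    have h1 := toRealRa c (elem_level hG hH hRa hRa1 hc0 hψRa)
    have h2 := toRealRb c (elem_level hG hH hRb hRb1 hc0 (heq ▸ hcbψ))
    nlinarith
  · suffices hfin : ∀ ε : ℝ, 0 < ε → c ≤ RHS + ε by
      by_contra hcon
      push_neg at hcon
      have := hfin ((c - RHS)/2) (by linarith)
      linarith
    intro ε hε
    obtain ⟨ε', hε'def⟩ : ∃ e : ℝ, e = min ε (c - cb) := ⟨_, rfl⟩
    have hε'0 : 0 < ε' := by rw [hε'def]; exact lt_min hε (by linarith)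
    have hε'le : ε' ≤ c - cb := hε'def ▸ min_le_right _ _
    have hε'ε : ε' ≤ ε := hε'def ▸ min_le_left _ _
    obtain ⟨cbε, hcbεdef⟩ : ∃ z : ℝ, z = cb + ε' := ⟨_, rfl⟩
    have hcbε_le : cbε ≤ c := by rw [hcbεdef]; linarith
    have hcbε_pos : 0 ≤ cbε := by rw [hcbεdef]; linarith
    have hnotD : cbε ∉ D := by
      intro hmem
      have := le_csSup hDbdd hmem
      rw [← hcbdef, hcbεdef] at this
      linarith
    have hψb : psi G H cbε < 2*Rb := by
      by_contra hcon
      push_neg at hcon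
      exact hnotD (by rw [hDdef]; exact ⟨⟨hcbε_pos, hcbε_le⟩, hcon⟩)
    obtain ⟨ca, hcadef⟩ : ∃ z : ℝ, z = (c - (1-t)*cbε)/t := ⟨_, rfl⟩
    have hca_mul : t * ca = c - (1-t)*cbε := by
      rw [hcadef]; field_simp
    have hca_c : c ≤ ca := by
      have hmul2 : (1-t) * cbε ≤ (1-t) * c :=
        mul_le_mul_of_nonneg_left hcbε_le (by linarith)
      have htc : t * c ≤ t * ca := by linarith
      exact le_of_mul_le_mul_left htc ht
    have hconv := psi_conv hG hH (c1 := cbε) (c2 := ca) (s := 1-t)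
      hcbε_pos (le_trans hcbε_le hca_c) (by linarith) (by linarith)
    rw [show (1:ℝ)-(1-t) = t by ring] at hconv
    rw [show (1-t)*cbε + t*ca = c by linarith [hca_mul]] at hconv
    have hψca : 2*Ra ≤ psi G H ca := by
      have hb' : (1-t) * psi G H cbε ≤ (1-t) * (2*Rb) :=
        mul_le_mul_of_nonneg_left hψb.le (by linarith)
      have h2R : 2*R = t*(2*Ra) + (1-t)*(2*Rb) := by rw [hRdef]; ring
      have hstep : t * (2*Ra) ≤ t * psi G H ca := by linarith
      exact le_of_mul_le_mul_left hstep ht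
    have h1 := toRealRa ca (elem_level hG hH hRa hRa1 (le_trans hc0 hca_c) hψca)
    have h2 := toRealRb cb (elem_level hG hH hRb hRb1 hcb0 hcbψ)
    have hm1 : t * ca ≤ t * muu G H Ra := mul_le_mul_of_nonneg_left h1 ht.le
    have hm2 : (1-t) * cb ≤ (1-t) * muu G H Rb :=
      mul_le_mul_of_nonneg_left h2 (by linarith)
    have hεbound : (1-t) * ε' ≤ ε := by nlinarith
    have hexp : (1-t)*cbε = (1-t)*cb + (1-t)*ε' := by rw [hcbεdef]; ring
    linarith [hca_mul, hexp, hm1, hm2, hεbound]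

/-- The recursion step preserves the invariant. -/
lemma good_step :
    GoodW (fun R => if 1 < R then 0 else ((1/2:ℝ) : EReal) * MM G H R)
      (fun R => if 1 < R then 0 else (1/2) * muu G H R) (max Cg Ch) := by
  have hmuu_cvx : ∀ x : ℝ, x ∈ Ioc (0:ℝ) 1 → ∀ y : ℝ, y ∈ Ioc (0:ℝ) 1 → ∀ a b : ℝ,
      0 ≤ a → 0 ≤ b → a + b = 1 →
      muu G H (a*x + b*y) ≤ a * muu G H x + b * muu G H y := by
    intro x hx y hy a b ha hb hab
    rcases eq_or_lt_of_le ha with rfl | ha0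
    · rw [show (0:ℝ)*x + b*y = b*y by ring, show b = 1 by linarith]
      simp
    rcases eq_or_lt_of_le hb with rfl | hb0
    · rw [show a*x + (0:ℝ)*y = a*x by ring, show a = 1 by linarith]
      simp
    have hMM : MM G H (a*x + b*y) ≤ ((a * muu G H x + b * muu G H y : ℝ) : EReal) := by
      rcases le_total x y with hxy | hxy
      · have := main_comb hG hH hx.1 hx.2 hy.1 hy.2 hxy ha0 (by linarith)
        rw [show 1 - a = b by linarith] at this
        exact this
      · have := main_comb hG hH hy.1 hy.2 hx.1 hx.2 hxy hb0 (by linarith)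
        rw [show 1 - b = a by linarith] at this
        rw [show a*x + b*y = b*y + a*x by ring, show a * muu G H x + b * muu G H y
          = b * muu G H y + a * muu G H x by ring]
        exact this
    have hcomb0 : 0 < a*x + b*y := by nlinarith [hx.1, hy.1]
    have hcomb1 : a*x + b*y ≤ 1 := by nlinarith [hx.2, hy.2]
    rw [MM_coe hG hH hcomb0 hcomb1] at hMM
    exact_mod_cast hMM
  have hnn : ∀ R : ℝ, 0 < R → 0 ≤ (if 1 < R then 0 else (1/2) * muu G H R) := by
    intro R hR
    by_cases h1R : 1 < R
    · rw [if_pos h1R]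
    · rw [if_neg h1R]
      have := muu_nonneg hG hH hR (not_lt.mp h1R)
      linarith
  have hz1 : ∀ R : ℝ, 1 ≤ R → (if 1 < R then 0 else (1/2) * muu G H R) = 0 := by
    intro R hR
    by_cases h1R : 1 < R
    · rw [if_pos h1R]
    · rw [if_neg h1R]
      have hR1 : R = 1 := le_antisymm (not_lt.mp h1R) hR
      subst hR1
      have hle := muu_le hG hH one_pos (le_refl 1)
      rw [hG.zero1 1 (le_refl 1), hH.zero1 1 (le_refl 1)] at hle
      have hge := muu_nonneg hG hH one_pos (le_refl 1)
      simp only [max_self] at hle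
      linarith
  refine ⟨?_, ?_, hnn, hz1, ?_, ?_, ?_⟩
  · -- coe
    intro R hR
    by_cases h1R : 1 < R
    · rw [if_pos h1R, if_pos h1R]; rfl
    · rw [if_neg h1R, if_neg h1R, MM_coe hG hH hR (not_lt.mp h1R), ← EReal.coe_mul]
  · -- top0
    rw [if_neg (by norm_num : ¬ (1:ℝ) < 0)]
    have hset : Mset G H 0 = {⊤} := by
      ext v
      constructor
      · rintro ⟨R₁, hR₁, rfl⟩
        have h1 : max (0:ℝ) (2*0-1) = 0 := by norm_num
        have h2 : min (1:ℝ) (2*0) = 0 := by norm_num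
        rw [h1, h2] at hR₁
        have hR₁0 : R₁ = 0 := le_antisymm hR₁.2 hR₁.1
        subst hR₁0
        rw [show 2*(0:ℝ) - 0 = 0 by ring, hG.top0, hH.top0, min_self]
        rfl
      · rintro rfl
        refine ⟨0, by norm_num, ?_⟩
        rw [show 2*(0:ℝ) - 0 = 0 by ring, hG.top0, hH.top0, min_self]
    rw [MM, hset, sSup_singleton]
    exact EReal.coe_mul_top_of_pos (by norm_num)
  · -- conv
    apply convexOn_glue (fun R hR => hnn R hR) hz1
    refine ⟨convex_Ioc 0 1, ?_⟩
    intro x hx y hy a b ha hb hab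
    have hcomb : a • x + b • y ∈ Ioc (0:ℝ) 1 := (convex_Ioc 0 1) hx hy ha hb hab
    simp only [smul_eq_mul]
    rw [if_neg (not_lt.mpr hx.2), if_neg (not_lt.mpr hy.2),
      if_neg (not_lt.mpr (by simpa [smul_eq_mul] using hcomb.2))]
    have := hmuu_cvx x hx y hy a b ha hb hab
    nlinarith
  · -- lin
    intro R hR0 hR1
    rw [if_neg (not_lt.mpr hR1)]
    have h1 := muu_le hG hH hR0 hR1
    have h2 := hG.lin R hR0 hR1
    have h3 := hH.lin R hR0 hR1
    have h4 := muu_nonneg hG hH hR0 hR1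
    have h5 : max (φg R) (φh R) ≤ max Cg Ch * (1 - R) := by
      apply max_le
      · exact h2.trans (by nlinarith [le_max_left Cg Ch, hG.Cnn])
      · exact h3.trans (by nlinarith [le_max_right Cg Ch, hH.Cnn])
    nlinarith
  · exact le_trans hG.Cnn (le_max_left _ _)

end TwoFun

end Stmt4Aux

namespace PreChannel

/-- basic validity: nonnegative kernel with unit row sums. -/
def Valid (W : PreChannel) : Prop :=
  (∀ x y, 0 ≤ W.W x y) ∧ (∀ x, ∑ y, W.W x y = 1)

lemma IsBMS.valid {W : PreChannel} (h : W.IsBMS) : W.Valid := ⟨h.1, h.2.1⟩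

lemma sum_prod_kernel {W : PreChannel} (h : W.Valid) (a b : Bool) :
    ∑ p : W.Y × W.Y, (1/2 : ℝ) * W.W a p.1 * W.W b p.2 = 1/2 := by
  rw [Fintype.sum_prod_type]
  have h1 : ∀ y₁, ∑ y₂, (1/2 : ℝ) * W.W a y₁ * W.W b y₂ = (1/2) * W.W a y₁ := by
    intro y₁
    rw [← Finset.mul_sum, h.2 b, mul_one]
  rw [Finset.sum_congr rfl (fun y₁ _ => h1 y₁), ← Finset.mul_sum, h.2 a, mul_one]

lemma valid_minus {W : PreChannel} (h : W.Valid) : W.minus.Valid := by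
  constructor
  · intro x p
    show 0 ≤ ∑ u₂ : Bool, (1/2 : ℝ) * W.W (Bool.xor x u₂) p.1 * W.W u₂ p.2
    apply Finset.sum_nonneg
    intro u _
    have h1 := h.1 (Bool.xor x u) p.1
    have h2 := h.1 u p.2
    positivity
  · intro x
    show ∑ p : W.Y × W.Y, ∑ u₂ : Bool, (1/2 : ℝ) * W.W (Bool.xor x u₂) p.1 * W.W u₂ p.2 = 1
    rw [Finset.sum_comm, Fintype.sum_bool, sum_prod_kernel h, sum_prod_kernel h]
    norm_num

lemma valid_plus {W : PreChannel} (h : W.Valid) : W.plus.Valid := by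
  constructor
  · intro x p
    have h1 := h.1 (Bool.xor p.2.2 x) p.1
    have h2 := h.1 x p.2.1
    show 0 ≤ (1/2 : ℝ) * W.W (Bool.xor p.2.2 x) p.1 * W.W x p.2.1
    positivity
  · intro x
    show ∑ p : W.Y × W.Y × Bool, (1/2 : ℝ) * W.W (Bool.xor p.2.2 x) p.1 * W.W x p.2.1 = 1
    have e1 : ∀ b : Bool, ∑ y₁, ∑ y₂, (1/2 : ℝ) * W.W b y₁ * W.W x y₂ = 1/2 := by
      intro b
      have h1 : ∀ y₁, ∑ y₂, (1/2 : ℝ) * W.W b y₁ * W.W x y₂ = (1/2) * W.W b y₁ := by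
        intro y₁
        rw [← Finset.mul_sum, h.2 x, mul_one]
      rw [Finset.sum_congr rfl (fun y₁ _ => h1 y₁), ← Finset.mul_sum, h.2 b, mul_one]
    simp only [Fintype.sum_prod_type, Fintype.sum_bool, Bool.true_xor, Bool.false_xor]
    simp only [Finset.sum_add_distrib]
    rcases x with _ | _ <;> simp only [Bool.not_false, Bool.not_true] <;>
      rw [e1, e1] <;> norm_num

lemma Zb_nonneg (W : PreChannel) : 0 ≤ Zb W :=
  Finset.sum_nonneg fun y _ => Real.sqrt_nonneg _

lemma Zb_le_one {W : PreChannel} (h : W.Valid) : Zb W ≤ 1 := by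
  have key : ∀ y, Real.sqrt (W.W false y * W.W true y) ≤ (W.W false y + W.W true y)/2 := by
    intro y
    rw [Real.sqrt_mul (h.1 false y)]
    nlinarith [sq_nonneg (Real.sqrt (W.W false y) - Real.sqrt (W.W true y)),
      Real.sq_sqrt (h.1 false y), Real.sq_sqrt (h.1 true y),
      Real.sqrt_nonneg (W.W false y), Real.sqrt_nonneg (W.W true y)]
  calc Zb W ≤ ∑ y, (W.W false y + W.W true y)/2 := Finset.sum_le_sum (fun y _ => key y)
  _ = 1 := by
      rw [← Finset.sum_div, Finset.sum_add_distrib, h.2 false, h.2 true]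
      norm_num

set_option maxHeartbeats 1000000 in
lemma Zb_minus {W : PreChannel} (h : W.Valid) : Zb W ≤ Zb W.minus := by
  have hksum : ∀ p : W.Y × W.Y,
      Real.sqrt (W.W false p.1 * W.W true p.1) * ((1/2) * (W.W false p.2 + W.W true p.2)) ≤
        Real.sqrt (W.minus.W false p * W.minus.W true p) := by
    intro p
    have ha := h.1 false p.1
    have hb := h.1 true p.1
    have hc := h.1 false p.2
    have hd := h.1 true p.2
    have hm0 : W.minus.W false p
        = (1/2 : ℝ) * W.W true p.1 * W.W true p.2 + (1/2) * W.W false p.1 * W.W false p.2 := by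
      show ∑ u₂ : Bool, (1/2 : ℝ) * W.W (Bool.xor false u₂) p.1 * W.W u₂ p.2 = _
      rw [Fintype.sum_bool]
      norm_num
    have hm1 : W.minus.W true p
        = (1/2 : ℝ) * W.W false p.1 * W.W true p.2 + (1/2) * W.W true p.1 * W.W false p.2 := by
      show ∑ u₂ : Bool, (1/2 : ℝ) * W.W (Bool.xor true u₂) p.1 * W.W u₂ p.2 = _
      rw [Fintype.sum_bool]
      norm_num
    rw [hm0, hm1]
    rw [show Real.sqrt (W.W false p.1 * W.W true p.1) * ((1/2) * (W.W false p.2 + W.W true p.2))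
      = (1/2) * Real.sqrt (W.W false p.1 * W.W true p.1) * (W.W false p.2 + W.W true p.2) by ring]
    have hLnn : 0 ≤ (1/2) * Real.sqrt (W.W false p.1 * W.W true p.1) * (W.W false p.2 + W.W true p.2) := by
      have := Real.sqrt_nonneg (W.W false p.1 * W.W true p.1)
      positivity
    rw [show ((1/2 : ℝ) * W.W true p.1 * W.W true p.2 + (1/2) * W.W false p.1 * W.W false p.2) *
        ((1/2) * W.W false p.1 * W.W true p.2 + (1/2) * W.W true p.1 * W.W false p.2)
      = (1/4) * ((W.W true p.1 * W.W true p.2 + W.W false p.1 * W.W false p.2) *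
        (W.W false p.1 * W.W true p.2 + W.W true p.1 * W.W false p.2)) by ring]
    rw [show (1/2 : ℝ) * Real.sqrt (W.W false p.1 * W.W true p.1) * (W.W false p.2 + W.W true p.2)
      = Real.sqrt ((1/4) * ((W.W false p.1 * W.W true p.1) * (W.W false p.2 + W.W true p.2)^2)) by
        rw [show (1/4 : ℝ) * ((W.W false p.1 * W.W true p.1) * (W.W false p.2 + W.W true p.2)^2)
          = ((1/2) * Real.sqrt (W.W false p.1 * W.W true p.1) * (W.W false p.2 + W.W true p.2))^2 by
            rw [mul_pow, mul_pow, Real.sq_sqrt (mul_nonneg ha hb)]; ring]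
        rw [Real.sqrt_sq hLnn]]
    apply Real.sqrt_le_sqrt
    nlinarith [mul_nonneg (mul_nonneg hc hd) (sq_nonneg (W.W false p.1 - W.W true p.1))]
  have h2 : ∑ y₂, (1/2 : ℝ) * (W.W false y₂ + W.W true y₂) = 1 := by
    rw [← Finset.mul_sum, Finset.sum_add_distrib, h.2 false, h.2 true]
    norm_num
  calc Zb W = ∑ y₁, Real.sqrt (W.W false y₁ * W.W true y₁) *
        (∑ y₂, (1/2 : ℝ) * (W.W false y₂ + W.W true y₂)) := by
        rw [Zb]
        exact (Finset.sum_congr rfl (fun y₁ _ => by rw [h2, mul_one])).symm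
  _ = ∑ y₁, ∑ y₂, Real.sqrt (W.W false y₁ * W.W true y₁) *
        ((1/2 : ℝ) * (W.W false y₂ + W.W true y₂)) := by
        rw [Finset.sum_congr rfl (fun y₁ _ => Finset.mul_sum _ _ _)]
  _ ≤ ∑ y₁, ∑ y₂, Real.sqrt (W.minus.W false (y₁, y₂) * W.minus.W true (y₁, y₂)) := by
        apply Finset.sum_le_sum
        intro y₁ _
        apply Finset.sum_le_sum
        intro y₂ _
        exact hksum (y₁, y₂)
  _ = Zb W.minus := by
        rw [show Zb W.minus
            = ∑ p : W.Y × W.Y, Real.sqrt (W.minus.W false p * W.minus.W true p) from rfl,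
          Fintype.sum_prod_type]

set_option maxHeartbeats 1000000 in
lemma Zb_plus {W : PreChannel} (h : W.Valid) : Zb W.plus = Zb W * Zb W := by
  have key : ∀ p : W.Y × W.Y × Bool, Real.sqrt (W.plus.W false p * W.plus.W true p)
      = (1/2) * (Real.sqrt (W.W false p.1 * W.W true p.1) *
          Real.sqrt (W.W false p.2.1 * W.W true p.2.1)) := by
    intro p
    have hprod : W.plus.W false p * W.plus.W true p
        = ((1/2) * (Real.sqrt (W.W false p.1 * W.W true p.1) *
            Real.sqrt (W.W false p.2.1 * W.W true p.2.1)))^2 := by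
      show ((1/2 : ℝ) * W.W (Bool.xor p.2.2 false) p.1 * W.W false p.2.1) *
          ((1/2) * W.W (Bool.xor p.2.2 true) p.1 * W.W true p.2.1) = _
      rw [Bool.xor_false, Bool.xor_true]
      rw [mul_pow, mul_pow, Real.sq_sqrt (mul_nonneg (h.1 false p.1) (h.1 true p.1)),
        Real.sq_sqrt (mul_nonneg (h.1 false p.2.1) (h.1 true p.2.1))]
      cases hb : p.2.2 <;> simp only [Bool.not_false, Bool.not_true] <;> ring
    rw [hprod, Real.sqrt_sq (by positivity)]
  show ∑ p : W.Y × W.Y × Bool, Real.sqrt (W.plus.W false p * W.plus.W true p) = Zb W * Zb W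
  rw [Finset.sum_congr rfl (fun p _ => key p)]
  simp only [Fintype.sum_prod_type, Fintype.sum_bool]
  have e2 : ∀ y₁ y₂ : W.Y, ((1:ℝ)/2) * (Real.sqrt (W.W false y₁ * W.W true y₁) *
        Real.sqrt (W.W false y₂ * W.W true y₂)) +
      (1/2) * (Real.sqrt (W.W false y₁ * W.W true y₁) * Real.sqrt (W.W false y₂ * W.W true y₂))
      = Real.sqrt (W.W false y₁ * W.W true y₁) * Real.sqrt (W.W false y₂ * W.W true y₂) :=
    fun _ _ => by ring
  rw [Finset.sum_congr rfl (fun y₁ _ => Finset.sum_congr rfl (fun y₂ _ => e2 y₁ y₂))]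
  rw [Zb, Finset.sum_mul_sum]

lemma Zb_minus_pos {W : PreChannel} (h : W.Valid) (hZ : 0 < Zb W) : 0 < Zb W.minus :=
  lt_of_lt_of_le hZ (Zb_minus h)

lemma Zb_plus_pos {W : PreChannel} (h : W.Valid) (hZ : 0 < Zb W) : 0 < Zb W.plus := by
  rw [Zb_plus h]; positivity


lemma real_add_rpow {x y p : ℝ} (hx : 0 ≤ x) (hy : 0 ≤ y) (hp : 1 ≤ p) :
    x ^ p + y ^ p ≤ (x + y) ^ p := by
  have h := NNReal.add_rpow_le_rpow_add x.toNNReal y.toNNReal hp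
  have h2 : ((x.toNNReal ^ p + y.toNNReal ^ p : NNReal) : ℝ)
      ≤ (((x.toNNReal + y.toNNReal) ^ p : NNReal) : ℝ) := NNReal.coe_le_coe.mpr h
  simp only [NNReal.coe_add, NNReal.coe_rpow, Real.coe_toNNReal x hx,
    Real.coe_toNNReal y hy] at h2
  exact h2

lemma E0_zero {W : PreChannel} (h : W.Valid) : E0 W 0 = 0 := by
  have hsum : ∑ y, ((1/2 : ℝ) * (W.W false y ^ ((1:ℝ)/(1+0)) + W.W true y ^ ((1:ℝ)/(1+0))))
      ^ ((1:ℝ)+0) = 1 := by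
    norm_num [Real.rpow_one]
    rw [← Finset.mul_sum, Finset.sum_add_distrib, h.2 false, h.2 true]
    norm_num
  rw [E0, hsum, Real.log_one, neg_zero]

lemma E0_le {W : PreChannel} (h : W.Valid) {ρ : ℝ} (h0 : 0 ≤ ρ) :
    E0 W ρ ≤ ρ * Real.log 2 := by
  have h1ρ : (0:ℝ) < 1 + ρ := by linarith
  have hterm : ∀ y : W.Y, (W.W false y + W.W true y) / 2 ^ ((1:ℝ)+ρ)
      ≤ ((1/2) * (W.W false y ^ ((1:ℝ)/(1+ρ)) + W.W true y ^ ((1:ℝ)/(1+ρ)))) ^ ((1:ℝ)+ρ) := by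
    intro y
    have ha := h.1 false y
    have hb := h.1 true y
    have haq : (W.W false y ^ ((1:ℝ)/(1+ρ))) ^ ((1:ℝ)+ρ) = W.W false y := by
      rw [← Real.rpow_mul ha, one_div, inv_mul_cancel₀ (ne_of_gt h1ρ), Real.rpow_one]
    have hbq : (W.W true y ^ ((1:ℝ)/(1+ρ))) ^ ((1:ℝ)+ρ) = W.W true y := by
      rw [← Real.rpow_mul hb, one_div, inv_mul_cancel₀ (ne_of_gt h1ρ), Real.rpow_one]
    have hA : 0 ≤ W.W false y ^ ((1:ℝ)/(1+ρ)) := Real.rpow_nonneg ha _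
    have hB : 0 ≤ W.W true y ^ ((1:ℝ)/(1+ρ)) := Real.rpow_nonneg hb _
    have hadd := real_add_rpow hA hB (by linarith : (1:ℝ) ≤ 1 + ρ)
    rw [haq, hbq] at hadd
    have hrw : ((1/2 : ℝ) * (W.W false y ^ ((1:ℝ)/(1+ρ)) + W.W true y ^ ((1:ℝ)/(1+ρ))))
        ^ ((1:ℝ)+ρ)
        = (W.W false y ^ ((1:ℝ)/(1+ρ)) + W.W true y ^ ((1:ℝ)/(1+ρ))) ^ ((1:ℝ)+ρ)
          / 2 ^ ((1:ℝ)+ρ) := by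
      rw [show (1/2 : ℝ) * (W.W false y ^ ((1:ℝ)/(1+ρ)) + W.W true y ^ ((1:ℝ)/(1+ρ)))
        = (W.W false y ^ ((1:ℝ)/(1+ρ)) + W.W true y ^ ((1:ℝ)/(1+ρ))) / 2 by ring]
      rw [Real.div_rpow (by positivity) (by norm_num : (0:ℝ) ≤ 2)]
    rw [hrw]
    rw [div_le_div_iff_of_pos_right (Real.rpow_pos_of_pos (by norm_num : (0:ℝ) < 2) _)]
    exact hadd
  have hsum : (2:ℝ) ^ (-ρ) ≤ ∑ y, ((1/2 : ℝ) * (W.W false y ^ ((1:ℝ)/(1+ρ))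
      + W.W true y ^ ((1:ℝ)/(1+ρ)))) ^ ((1:ℝ)+ρ) := by
    have h2' : (2:ℝ)^((1:ℝ)+ρ) = 2 * 2^ρ := by
      rw [Real.rpow_add (by norm_num : (0:ℝ) < 2), Real.rpow_one]
    have heq : (2:ℝ)^(-ρ) = ∑ y, (W.W false y + W.W true y) / 2 ^ ((1:ℝ)+ρ) := by
      rw [← Finset.sum_div, Finset.sum_add_distrib, h.2 false, h.2 true, h2',
        Real.rpow_neg (by norm_num : (0:ℝ) ≤ 2)]
      have := Real.rpow_pos_of_pos (show (0:ℝ) < 2 by norm_num) ρ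
      field_simp
      norm_num
    rw [heq]
    exact Finset.sum_le_sum (fun y _ => hterm y)
  have hpos : (0:ℝ) < (2:ℝ)^(-ρ) := Real.rpow_pos_of_pos (by norm_num) _
  have hlog := Real.log_le_log hpos hsum
  rw [Real.log_rpow (by norm_num : (0:ℝ) < 2)] at hlog
  rw [E0]
  linarith

lemma Ex_le_log2 {W : PreChannel} (hZ : 0 < Zb W) {ρ : ℝ} (hρ : 1 ≤ ρ) :
    Ex W ρ ≤ ρ * Real.log 2 := by
  have hρ0 : (0:ℝ) < ρ := lt_of_lt_of_le one_pos hρ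
  have hz : 0 < Zb W ^ ((1:ℝ)/ρ) := Real.rpow_pos_of_pos hZ _
  have hlog : Real.log (1/2 : ℝ) ≤ Real.log ((1 + Zb W ^ ((1:ℝ)/ρ))/2) :=
    Real.log_le_log (by norm_num) (by linarith)
  have hhalf : Real.log (1/2 : ℝ) = -Real.log 2 := by
    rw [one_div, Real.log_inv]
  have h2 := mul_le_mul_of_nonneg_left hlog hρ0.le
  rw [hhalf] at h2
  rw [Ex]
  linarith

lemma Ex_le_half {W : PreChannel} (hZ : 0 < Zb W) {ρ : ℝ} (hρ : 1 ≤ ρ) :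
    Ex W ρ ≤ -Real.log (Zb W)/2 := by
  have hρ0 : (0:ℝ) < ρ := lt_of_lt_of_le one_pos hρ
  have hz : 0 < Zb W ^ ((1:ℝ)/ρ) := Real.rpow_pos_of_pos hZ _
  have hsq : Real.sqrt (Zb W ^ ((1:ℝ)/ρ)) ≤ (1 + Zb W ^ ((1:ℝ)/ρ))/2 := by
    nlinarith [sq_nonneg (1 - Real.sqrt (Zb W ^ ((1:ℝ)/ρ))), Real.sq_sqrt hz.le,
      Real.sqrt_nonneg (Zb W ^ ((1:ℝ)/ρ))]
  have hlog1 : Real.log (Real.sqrt (Zb W ^ ((1:ℝ)/ρ)))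
      ≤ Real.log ((1 + Zb W ^ ((1:ℝ)/ρ))/2) :=
    Real.log_le_log (Real.sqrt_pos.mpr hz) hsq
  rw [Real.log_sqrt hz.le, Real.log_rpow hZ] at hlog1
  have h2 := mul_le_mul_of_nonneg_left hlog1 hρ0.le
  have h3 : ρ * (1/ρ * Real.log (Zb W) / 2) = Real.log (Zb W) / 2 := by
    field_simp
  rw [h3] at h2
  rw [Ex]
  linarith

end PreChannel

namespace Stmt4Aux

open PreChannel

noncomputable def erS (W : PreChannel) (R : ℝ) : ℝ :=
  sSup {x : ℝ | ∃ ρ ∈ Set.Icc (0:ℝ) 1, x = E0 W ρ - ρ * R * Real.log 2}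

noncomputable def exS (W : PreChannel) (R : ℝ) : ℝ :=
  sSup {x : ℝ | ∃ ρ : ℝ, 1 ≤ ρ ∧ x = Ex W ρ - ρ * R * Real.log 2}

noncomputable def CE (W : PreChannel) : ℝ :=
  max (Real.log 2) (max 0 (-Real.log (Zb W)/2))

noncomputable def phiE (W : PreChannel) (R : ℝ) : ℝ :=
  if 1 < R then 0 else max (erS W R) (exS W R)

section Base

variable {W : PreChannel}

lemma log2_nonneg : (0:ℝ) ≤ Real.log 2 := Real.log_nonneg one_le_two

lemma CE_log2 : Real.log 2 ≤ CE W := le_max_left _ _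

lemma CE_nonneg : (0:ℝ) ≤ CE W := le_trans log2_nonneg CE_log2

lemma CE_K : -Real.log (Zb W)/2 ≤ CE W := le_trans (le_max_right _ _) (le_max_right _ _)

lemma erSet_nonempty (R : ℝ) :
    Set.Nonempty {x : ℝ | ∃ ρ ∈ Set.Icc (0:ℝ) 1, x = E0 W ρ - ρ * R * Real.log 2} :=
  ⟨E0 W 0 - 0 * R * Real.log 2, 0, ⟨le_refl 0, zero_le_one⟩, rfl⟩

lemma erSet_bdd (h : W.Valid) {R : ℝ} (hR : 0 ≤ R) :
    BddAbove {x : ℝ | ∃ ρ ∈ Set.Icc (0:ℝ) 1, x = E0 W ρ - ρ * R * Real.log 2} := by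
  refine ⟨Real.log 2, ?_⟩
  rintro x ⟨ρ, hρ, rfl⟩
  have h1 := E0_le h hρ.1
  have hl2 : (0:ℝ) ≤ Real.log 2 := log2_nonneg
  have h2 : 0 ≤ ρ * R * Real.log 2 := by
    have := hρ.1
    positivity
  nlinarith [hρ.2]

lemma erS_nonneg (h : W.Valid) {R : ℝ} (hR : 0 ≤ R) : 0 ≤ erS W R := by
  have hmem : E0 W 0 - 0 * R * Real.log 2 ∈
      {x : ℝ | ∃ ρ ∈ Set.Icc (0:ℝ) 1, x = E0 W ρ - ρ * R * Real.log 2} :=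
    ⟨0, ⟨le_refl 0, zero_le_one⟩, rfl⟩
  have h2 := le_csSup (erSet_bdd h hR) hmem
  rw [E0_zero h] at h2
  rw [zero_mul, zero_mul, sub_zero] at h2
  exact h2

lemma erS_le (h : W.Valid) {R : ℝ} (hR0 : 0 ≤ R) (hR1 : R ≤ 1) :
    erS W R ≤ Real.log 2 * (1 - R) := by
  apply csSup_le (erSet_nonempty R)
  rintro x ⟨ρ, hρ, rfl⟩
  have h1 := E0_le h hρ.1
  have hl2 : (0:ℝ) ≤ Real.log 2 := log2_nonneg
  nlinarith [hρ.1, hρ.2, mul_le_mul_of_nonneg_right hρ.2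
    (mul_nonneg hl2 (by linarith : (0:ℝ) ≤ 1 - R))]

lemma exSet_nonempty (R : ℝ) :
    Set.Nonempty {x : ℝ | ∃ ρ : ℝ, 1 ≤ ρ ∧ x = Ex W ρ - ρ * R * Real.log 2} :=
  ⟨Ex W 1 - 1 * R * Real.log 2, 1, le_refl 1, rfl⟩

lemma ex_line_le (hZ : 0 < Zb W) {R ρ : ℝ} (hR : 0 ≤ R) (hρ : 1 ≤ ρ) :
    Ex W ρ - ρ * R * Real.log 2 ≤ max 0 (-Real.log (Zb W)/2) := by
  have h1 := Ex_le_half hZ hρ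
  have h2 : 0 ≤ ρ * R * Real.log 2 := by
    have hρ0 : (0:ℝ) ≤ ρ := by linarith
    have hl2 : (0:ℝ) ≤ Real.log 2 := log2_nonneg
    positivity
  have h3 := le_max_right (0:ℝ) (-Real.log (Zb W)/2)
  linarith

lemma exSet_bdd (hZ : 0 < Zb W) {R : ℝ} (hR : 0 ≤ R) :
    BddAbove {x : ℝ | ∃ ρ : ℝ, 1 ≤ ρ ∧ x = Ex W ρ - ρ * R * Real.log 2} := by
  refine ⟨max 0 (-Real.log (Zb W)/2), ?_⟩
  rintro x ⟨ρ, hρ, rfl⟩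
  exact ex_line_le hZ hR hρ

lemma exS_le (hZ : 0 < Zb W) {R : ℝ} (hR0 : 0 ≤ R) (hR1 : R ≤ 1) :
    exS W R ≤ CE W * (1 - R) := by
  apply csSup_le (exSet_nonempty R)
  rintro x ⟨ρ, hρ, rfl⟩
  have hρ0 : (0:ℝ) < ρ := lt_of_lt_of_le one_pos hρ
  have hK := Ex_le_half hZ hρ
  have hL := Ex_le_log2 hZ hρ
  have hl2 : (0:ℝ) ≤ Real.log 2 := log2_nonneg
  rcases le_or_gt (ρ * Real.log 2) (CE W) with hc | hc
  · have hx : Ex W ρ - ρ * R * Real.log 2 ≤ (ρ * Real.log 2) * (1 - R) := by nlinarith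
    exact hx.trans (mul_le_mul_of_nonneg_right hc (by linarith))
  · have h3 := mul_le_mul_of_nonneg_right hc.le hR0
    have h4 := CE_K (W := W)
    nlinarith

lemma Er_eq {R : ℝ} (hR0 : 0 < R) (hR1 : R ≤ 1) : Er W R = ((erS W R : ℝ) : EReal) := by
  rw [Er, if_neg (ne_of_gt hR0), if_neg (not_lt.mpr hR1)]
  rfl

lemma Eex_eq (hZ : 0 < Zb W) {R : ℝ} (hR : 0 ≤ R) :
    Eex W R = ((exS W R : ℝ) : EReal) := by
  have hbdd := exSet_bdd hZ (W := W) hR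
  have hne := exSet_nonempty (W := W) R
  have hne_top : Eex W R ≠ ⊤ := by
    apply ne_of_lt
    apply lt_of_le_of_lt (b := ((max 0 (-Real.log (Zb W)/2) : ℝ) : EReal))
    · apply iSup_le
      intro ρ
      exact EReal.coe_le_coe_iff.mpr (ex_line_le hZ hR ρ.2)
    · exact EReal.coe_lt_top _
  have hne_bot : Eex W R ≠ ⊥ := by
    apply ne_of_gt
    apply lt_of_lt_of_le (EReal.bot_lt_coe (Ex W 1 - 1 * R * Real.log 2))
    exact le_iSup (fun (ρ' : {r : ℝ // 1 ≤ r}) =>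
      ((Ex W ρ'.1 - ρ'.1 * R * Real.log 2 : ℝ) : EReal)) ⟨1, le_refl 1⟩
  apply le_antisymm
  · apply iSup_le
    intro ρ
    have hmem : Ex W ρ.1 - ρ.1 * R * Real.log 2 ∈
        {x : ℝ | ∃ ρ' : ℝ, 1 ≤ ρ' ∧ x = Ex W ρ' - ρ' * R * Real.log 2} := ⟨ρ.1, ρ.2, rfl⟩
    exact EReal.coe_le_coe_iff.mpr (le_csSup hbdd hmem)
  · rw [← EReal.coe_toReal hne_top hne_bot]
    apply EReal.coe_le_coe_iff.mpr
    apply csSup_le hne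
    rintro x ⟨ρ, hρ, rfl⟩
    have hle : ((Ex W ρ - ρ * R * Real.log 2 : ℝ) : EReal) ≤ Eex W R :=
      le_iSup (fun (ρ' : {r : ℝ // 1 ≤ r}) =>
        ((Ex W ρ'.1 - ρ'.1 * R * Real.log 2 : ℝ) : EReal)) ⟨ρ, hρ⟩
    rw [← EReal.coe_toReal hne_top hne_bot] at hle
    exact EReal.coe_le_coe_iff.mp hle

lemma good_echan (h : W.Valid) (hZ : 0 < Zb W) : GoodW (Echan W) (phiE W) (CE W) := by
  have hnonneg : ∀ R : ℝ, 0 < R → 0 ≤ phiE W R := by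
    intro R hR
    rw [phiE]
    by_cases h1R : 1 < R
    · rw [if_pos h1R]
    · rw [if_neg h1R]
      exact le_trans (erS_nonneg h hR.le) (le_max_left _ _)
  have hzero1 : ∀ R : ℝ, 1 ≤ R → phiE W R = 0 := by
    intro R hR
    rw [phiE]
    by_cases h1R : 1 < R
    · rw [if_pos h1R]
    · rw [if_neg h1R]
      have hR1 : R = 1 := le_antisymm (not_lt.mp h1R) hR
      subst hR1
      have he1 : erS W 1 = 0 := by
        have := erS_le h zero_le_one (le_refl 1)
        have := erS_nonneg h (zero_le_one)
        nlinarith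
      have he2 : exS W 1 ≤ 0 := by
        have := exS_le hZ zero_le_one (le_refl (1:ℝ))
        nlinarith
      rw [he1]
      exact max_eq_left he2
  refine ⟨?_, ?_, hnonneg, hzero1, ?_, ?_, CE_nonneg⟩
  · -- coe
    intro R hR
    rw [Echan, phiE]
    by_cases h1R : 1 < R
    · rw [if_pos h1R, if_pos h1R]
      exact EReal.coe_zero.symm
    · rw [if_neg h1R, if_neg h1R, Er_eq hR (not_lt.mp h1R), Eex_eq hZ hR.le, coe_max']
  · -- top0
    rw [Echan, if_neg (by norm_num : ¬ (1:ℝ) < 0), Er, if_pos rfl]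
    exact max_eq_left le_top
  · -- conv
    apply convexOn_glue hnonneg hzero1
    refine ⟨convex_Ioc 0 1, ?_⟩
    intro x hx y hy a b ha hb hab
    have hcomb : a • x + b • y ∈ Set.Ioc (0:ℝ) 1 := (convex_Ioc 0 1) hx hy ha hb hab
    simp only [smul_eq_mul] at hcomb ⊢
    rw [phiE, phiE, phiE, if_neg (not_lt.mpr hx.2), if_neg (not_lt.mpr hy.2),
      if_neg (not_lt.mpr hcomb.2)]
    have her : erS W (a*x + b*y) ≤ a * erS W x + b * erS W y := by
      apply csSup_le (erSet_nonempty _)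
      rintro v ⟨ρ, hρ, rfl⟩
      have hv : E0 W ρ - ρ*(a*x+b*y)*Real.log 2
          = a*(E0 W ρ - ρ*x*Real.log 2) + b*(E0 W ρ - ρ*y*Real.log 2) := by
        linear_combination (-(E0 W ρ)) * hab
      rw [hv]
      have m1 : E0 W ρ - ρ*x*Real.log 2 ≤ erS W x :=
        le_csSup (erSet_bdd h hx.1.le) ⟨ρ, hρ, rfl⟩
      have m2 : E0 W ρ - ρ*y*Real.log 2 ≤ erS W y :=
        le_csSup (erSet_bdd h hy.1.le) ⟨ρ, hρ, rfl⟩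
      exact add_le_add (mul_le_mul_of_nonneg_left m1 ha) (mul_le_mul_of_nonneg_left m2 hb)
    have hex : exS W (a*x + b*y) ≤ a * exS W x + b * exS W y := by
      apply csSup_le (exSet_nonempty _)
      rintro v ⟨ρ, hρ, rfl⟩
      have hv : Ex W ρ - ρ*(a*x+b*y)*Real.log 2
          = a*(Ex W ρ - ρ*x*Real.log 2) + b*(Ex W ρ - ρ*y*Real.log 2) := by
        linear_combination (-(Ex W ρ)) * hab
      rw [hv]
      have m1 : Ex W ρ - ρ*x*Real.log 2 ≤ exS W x :=
        le_csSup (exSet_bdd hZ hx.1.le) ⟨ρ, hρ, rfl⟩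
      have m2 : Ex W ρ - ρ*y*Real.log 2 ≤ exS W y :=
        le_csSup (exSet_bdd hZ hy.1.le) ⟨ρ, hρ, rfl⟩
      exact add_le_add (mul_le_mul_of_nonneg_left m1 ha) (mul_le_mul_of_nonneg_left m2 hb)
    apply max_le
    · refine her.trans (add_le_add ?_ ?_)
      · exact mul_le_mul_of_nonneg_left (le_max_left _ _) ha
      · exact mul_le_mul_of_nonneg_left (le_max_left _ _) hb
    · refine hex.trans (add_le_add ?_ ?_)
      · exact mul_le_mul_of_nonneg_left (le_max_right _ _) ha
      · exact mul_le_mul_of_nonneg_left (le_max_right _ _) hb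
  · -- lin
    intro R hR0 hR1
    rw [phiE, if_neg (not_lt.mpr hR1)]
    apply max_le
    · exact (erS_le h hR0.le hR1).trans
        (mul_le_mul_of_nonneg_right CE_log2 (by linarith))
    · exact exS_le hZ hR0.le hR1

end Base

lemma good_elam : ∀ (l : ℕ) (W : PreChannel), W.Valid → 0 < Zb W →
    ∃ φ C, GoodW (ElamInf W l) φ C := by
  intro l
  induction l with
  | zero =>
      intro W h hZ
      exact ⟨phiE W, CE W, good_echan h hZ⟩
  | succ l ih =>
      intro W h hZ
      obtain ⟨φg, Cg, hg⟩ := ih W.minus (valid_minus h) (Zb_minus_pos h hZ)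
      obtain ⟨φh, Ch, hh⟩ := ih W.plus (valid_plus h) (Zb_plus_pos h hZ)
      have hstep := good_step hg hh
      have heq : ElamInf W (l+1) = fun R => if 1 < R then 0
          else ((1/2:ℝ) : EReal) * MM (ElamInf W.minus l) (ElamInf W.plus l) R := rfl
      rw [heq]
      exact ⟨_, _, hstep⟩

end Stmt4Aux

/-- `E_λ(W, ·)` is convex on `(0, ∞)`. -/
theorem stmt4 (W : PreChannel) (hW : W.IsBMS) (hZ : 0 < Zb W) (lam : ℕ) :
    ∀ R₁ R₂ t : ℝ, 0 < R₁ → 0 < R₂ → 0 ≤ t → t ≤ 1 →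
      ElamInf W lam (t * R₁ + (1 - t) * R₂) ≤
        (t : EReal) * ElamInf W lam R₁ + ((1 - t : ℝ) : EReal) * ElamInf W lam R₂ := by
  obtain ⟨φ, C, hgood⟩ := Stmt4Aux.good_elam lam W hW.valid hZ
  intro R₁ R₂ t hR₁ hR₂ ht0 ht1
  have hcomb : 0 < t * R₁ + (1 - t) * R₂ := by
    rcases eq_or_lt_of_le ht0 with rfl | ht0'
    · simpa using hR₂
    · nlinarith [mul_pos ht0' hR₁, mul_nonneg (by linarith : (0:ℝ) ≤ 1 - t) hR₂.le]
  rw [hgood.coe _ hcomb, hgood.coe _ hR₁, hgood.coe _ hR₂]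
  have hc := hgood.conv.2 (Set.mem_Ioi.mpr hR₁) (Set.mem_Ioi.mpr hR₂) ht0
    (by linarith : (0:ℝ) ≤ 1 - t) (by ring : t + (1 - t) = 1)
  simp only [smul_eq_mul] at hc
  rw [← EReal.coe_mul, ← EReal.coe_mul, ← EReal.coe_add]
  exact EReal.coe_le_coe_iff.mpr hc
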